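/- arXiv:1012.5437 — 8 statements merged into one kernel-verified Lean document; each statement's English description precedes it below -/
import Mathlib

section
/- Suppose a ≥ 1, a·(m+1) ≠ b·(n+1) (i.e. s₁ ≠ s₂), and moreover d = 0 or d·(n+1) ≠ a·(m+1) (i.e. s₁ ≠ s₃ when s₃ is defined). Then lim_{s→s₁} (s−s₁)·Z_{n,m}(s) = 1/(a·(m+1) − b·(n+1)), which is nonzero; consequently s₁ = −(n+1)/a is a pole of order exactly one of Z_{n,m}. -/
/-- The local topological zeta function of the monomial ideal
`I = (x^a y^b, x^c y^d) ⊆ ℂ[x,y]` with respect to the volume form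
`x^n y^m dx ∧ dy`, as a function `ℚ → ℚ`. -/
noncomputable def Z (a b c d n m : ℕ) (s : ℚ) : ℚ :=
  ((c : ℚ) - a) /
      (((a : ℚ) * s + n + 1) *
        (((b : ℚ) * c - (a : ℚ) * d) * s + ((b : ℚ) - d) * (n + 1) + ((c : ℚ) - a) * (m + 1))) +
    ((b : ℚ) - d) /
      ((((b : ℚ) * c - (a : ℚ) * d) * s + ((b : ℚ) - d) * (n + 1) + ((c : ℚ) - a) * (m + 1)) *
        ((d : ℚ) * s + m + 1))

/-- `s₀` is a pole of order `k` of `Z` if `lim_{s → s₀} (s - s₀)^k * Z s`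
exists and is nonzero. -/
def IsPoleOfOrder (Z : ℚ → ℚ) (s₀ : ℚ) (k : ℕ) : Prop :=
  ∃ L : ℚ, L ≠ 0 ∧
    Filter.Tendsto (fun s => (s - s₀) ^ k * Z s) (nhdsWithin s₀ {s₀}ᶜ) (nhds L)

/-- `s₀` is a pole of `Z` if it is a pole of some order `k ≥ 1`. -/
def IsPole (Z : ℚ → ℚ) (s₀ : ℚ) : Prop :=
  ∃ k : ℕ, 1 ≤ k ∧ IsPoleOfOrder Z s₀ k

theorem stmt0 (a b c d n m : ℕ) (hac : a < c) (hdb : d < b) (ha : 1 ≤ a)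
    (h12 : a * (m + 1) ≠ b * (n + 1))
    (h13 : d = 0 ∨ d * (n + 1) ≠ a * (m + 1)) :
    Filter.Tendsto (fun s => (s - (-((n : ℚ) + 1) / a)) * Z a b c d n m s)
        (nhdsWithin (-((n : ℚ) + 1) / a) {(-((n : ℚ) + 1) / a)}ᶜ)
        (nhds (1 / ((a : ℚ) * (m + 1) - (b : ℚ) * (n + 1)))) ∧
      1 / ((a : ℚ) * (m + 1) - (b : ℚ) * (n + 1)) ≠ 0 ∧
      IsPoleOfOrder (Z a b c d n m) (-((n : ℚ) + 1) / a) 1 ∧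
      ∀ k : ℕ, 1 ≤ k → k ≠ 1 → ¬ IsPoleOfOrder (Z a b c d n m) (-((n : ℚ) + 1) / a) k := by
  have ha' : (a : ℚ) ≠ 0 := Nat.cast_ne_zero.mpr (by omega)
  set s₁ : ℚ := -((n : ℚ) + 1) / a with hs₁
  set B : ℚ → ℚ := fun s =>
    ((b : ℚ) * c - (a : ℚ) * d) * s + ((b : ℚ) - d) * (n + 1) + ((c : ℚ) - a) * (m + 1) with hBdef
  set D : ℚ → ℚ := fun s => (d : ℚ) * s + m + 1 with hDdef
  have hZeq : ∀ s, Z a b c d n m s =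
      ((c : ℚ) - a) / (((a : ℚ) * s + n + 1) * B s) + ((b : ℚ) - d) / (B s * D s) := fun s => rfl
  have hca : (c : ℚ) - a ≠ 0 := sub_ne_zero.mpr (by exact_mod_cast hac.ne')
  have hKey : (a : ℚ) * (m + 1) - (b : ℚ) * (n + 1) ≠ 0 := by
    refine sub_ne_zero.mpr ?_
    intro h
    apply h12
    have : ((a * (m + 1) : ℕ) : ℚ) = ((b * (n + 1) : ℕ) : ℚ) := by push_cast; exact h
    exact_mod_cast this
  set L : ℚ := 1 / ((a : ℚ) * (m + 1) - (b : ℚ) * (n + 1)) with hLdef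
  have hL : L ≠ 0 := one_div_ne_zero hKey
  have hB1 : B s₁ = ((c : ℚ) - a) * ((a : ℚ) * (m + 1) - (b : ℚ) * (n + 1)) / a := by
    simp only [hBdef, hs₁]
    field_simp
    ring
  have hBne : B s₁ ≠ 0 := by
    rw [hB1]
    exact div_ne_zero (mul_ne_zero hca hKey) ha'
  have hDne : D s₁ ≠ 0 := by
    rcases h13 with h | h
    · simp only [hDdef, hs₁, h]
      push_cast
      norm_num
      positivity
    · simp only [hDdef, hs₁]
      have : (d : ℚ) * (-((n : ℚ) + 1) / a) + m + 1 =
          ((a : ℚ) * (m + 1) - (d : ℚ) * (n + 1)) / a := by field_simp; ring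
      rw [this]
      refine div_ne_zero (sub_ne_zero.mpr ?_) ha'
      intro he
      apply h
      have : ((d * (n + 1) : ℕ) : ℚ) = ((a * (m + 1) : ℕ) : ℚ) := by push_cast; linarith
      exact_mod_cast this
  set F : ℚ → ℚ := fun s =>
    ((c : ℚ) - a) / ((a : ℚ) * B s) + ((b : ℚ) - d) * (s - s₁) / (B s * D s) with hFdef
  have hFs₁ : F s₁ = L := by
    simp only [hFdef, sub_self, mul_zero, zero_div, add_zero, hB1, hLdef]
    field_simp
  have hBc : Continuous B := by fun_prop
  have hDc : Continuous D := by fun_prop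
  have hFc : ContinuousAt F s₁ := by
    apply ContinuousAt.add
    · exact ContinuousAt.div continuousAt_const
        ((continuous_const.mul hBc).continuousAt) (mul_ne_zero ha' hBne)
    · exact ContinuousAt.div
        (by fun_prop) ((hBc.mul hDc).continuousAt) (mul_ne_zero hBne hDne)
  have hpt : ∀ s : ℚ, s ≠ s₁ → (s - s₁) * Z a b c d n m s = F s := by
    intro s hs
    have hss : s - s₁ ≠ 0 := sub_ne_zero.mpr hs
    have hA : (a : ℚ) * s + n + 1 = a * (s - s₁) := by
      simp only [hs₁]; field_simp; ring
    rw [hZeq, hFdef]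
    by_cases hB0 : B s = 0
    · simp [hB0]
    · by_cases hD0 : D s = 0
      · simp only [hD0, mul_zero, div_zero, add_zero]
        rw [hA]
        rw [show ((a : ℚ) * (s - s₁)) * B s = (s - s₁) * ((a : ℚ) * B s) by ring]
        rw [div_mul_eq_div_div, mul_div_assoc', mul_div_assoc', mul_div_cancel_left₀ _ hss]
      · rw [hA, mul_add]
        congr 1
        · rw [show ((a : ℚ) * (s - s₁)) * B s = (s - s₁) * ((a : ℚ) * B s) by ring]
          rw [div_mul_eq_div_div, mul_div_assoc', mul_div_assoc', mul_div_cancel_left₀ _ hss]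
        · ring
  have heq : F =ᶠ[nhdsWithin s₁ {s₁}ᶜ] fun s => (s - s₁) * Z a b c d n m s := by
    filter_upwards [self_mem_nhdsWithin] with s hs
    exact (hpt s hs).symm
  have hmain : Filter.Tendsto (fun s => (s - s₁) * Z a b c d n m s)
      (nhdsWithin s₁ {s₁}ᶜ) (nhds L) := by
    have := hFc.tendsto
    rw [hFs₁] at this
    exact (this.mono_left nhdsWithin_le_nhds).congr' heq
  refine ⟨hmain, hL, ⟨L, hL, by simpa using hmain⟩, ?_⟩
  rintro k hk1 hkne ⟨L', hL', hT⟩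
  have hk2 : 2 ≤ k := by omega
  have hzero : Filter.Tendsto (fun s => (s - s₁) ^ k * Z a b c d n m s)
      (nhdsWithin s₁ {s₁}ᶜ) (nhds 0) := by
    have h1 : Filter.Tendsto (fun s : ℚ => (s - s₁) ^ (k - 1))
        (nhdsWithin s₁ {s₁}ᶜ) (nhds 0) := by
      have : Filter.Tendsto (fun s : ℚ => (s - s₁) ^ (k - 1)) (nhds s₁)
          (nhds ((s₁ - s₁) ^ (k - 1))) := by
        exact (Continuous.tendsto (by fun_prop) s₁)
      simpa [zero_pow (by omega : k - 1 ≠ 0)] using this.mono_left nhdsWithin_le_nhds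
    have := h1.mul hmain
    rw [zero_mul] at this
    refine this.congr' ?_
    filter_upwards [self_mem_nhdsWithin] with s hs
    have : k - 1 + 1 = k := by omega
    rw [← mul_assoc, ← pow_succ, this]
  exact hL' (tendsto_nhds_unique hT hzero)
end

section
/- Suppose a ≥ 1, d ≥ 1, d·(n+1) = a·(m+1) (i.e. s₁ = s₃), and a·(m+1) ≠ b·(n+1) (i.e. s₁ ≠ s₂). Then lim_{s→s₁} (s−s₁)·Z_{n,m}(s) = (1/(a·(m+1) − b·(n+1)))·(1 + a·(b−d)/(d·(c−a))), which is nonzero; consequently s₁ is a pole of order exactly one of Z_{n,m}. -/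
private lemma aux_L (a b c d n m : ℕ)
    (h13c : (d:ℚ) * ((n:ℚ) + 1) = (a:ℚ) * ((m:ℚ) + 1))
    (haQ : (0:ℚ) < a) (hdQ : (0:ℚ) < d) (hca : (0:ℚ) < (c:ℚ) - a) (hbd : (0:ℚ) < (b:ℚ) - d)
    (hn1 : (0:ℚ) < (n:ℚ) + 1)
    (h12c : (a:ℚ) * ((m:ℚ) + 1) ≠ (b:ℚ) * ((n:ℚ) + 1)) :
    (((c:ℚ) - a) / a + ((b:ℚ) - d) / d) / (((n:ℚ) + 1) * ((a:ℚ) - c) * ((b:ℚ) - d) / a)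
    = (1 / ((a : ℚ) * ((m:ℚ) + 1) - (b : ℚ) * ((n:ℚ) + 1))) *
          (1 + (a : ℚ) * ((b : ℚ) - d) / ((d : ℚ) * ((c : ℚ) - a))) := by
  have hD : (a:ℚ) * ((m:ℚ) + 1) - (b:ℚ) * ((n:ℚ) + 1) ≠ 0 := sub_ne_zero.mpr h12c
  have hQne : ((n:ℚ) + 1) * ((a:ℚ) - c) * ((b:ℚ) - d) ≠ 0 := by
    intro h
    rcases mul_eq_zero.mp h with h | h
    · rcases mul_eq_zero.mp h with h | h <;> nlinarith
    · linarith
  have hac' : (a:ℚ) - c ≠ 0 := by linarith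
  have hca' : (c:ℚ) - a ≠ 0 := by linarith
  have hbd' : (b:ℚ) - d ≠ 0 := by linarith
  field_simp
  linear_combination (-((c:ℚ)-a)) * h13c

theorem stmt1 (a b c d n m : ℕ) (hac : a < c) (hdb : d < b) (ha : 1 ≤ a) (hd : 1 ≤ d)
    (h13 : d * (n + 1) = a * (m + 1))
    (h12 : a * (m + 1) ≠ b * (n + 1)) :
    Filter.Tendsto (fun s => (s - (-((n : ℚ) + 1) / a)) * Z a b c d n m s)
        (nhdsWithin (-((n : ℚ) + 1) / a) {(-((n : ℚ) + 1) / a)}ᶜ)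
        (nhds ((1 / ((a : ℚ) * (m + 1) - (b : ℚ) * (n + 1))) *
          (1 + (a : ℚ) * ((b : ℚ) - d) / ((d : ℚ) * ((c : ℚ) - a))))) ∧
      (1 / ((a : ℚ) * (m + 1) - (b : ℚ) * (n + 1))) *
          (1 + (a : ℚ) * ((b : ℚ) - d) / ((d : ℚ) * ((c : ℚ) - a))) ≠ 0 ∧
      IsPoleOfOrder (Z a b c d n m) (-((n : ℚ) + 1) / a) 1 ∧
      ∀ k : ℕ, 1 ≤ k → k ≠ 1 → ¬ IsPoleOfOrder (Z a b c d n m) (-((n : ℚ) + 1) / a) k := by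
  set s1 : ℚ := -((n : ℚ) + 1) / a with hs1
  set L : ℚ := (1 / ((a : ℚ) * (m + 1) - (b : ℚ) * (n + 1))) *
      (1 + (a : ℚ) * ((b : ℚ) - d) / ((d : ℚ) * ((c : ℚ) - a))) with hLdef
  have haQ : (0:ℚ) < a := by exact_mod_cast ha
  have hdQ : (0:ℚ) < d := by exact_mod_cast hd
  have hcaQ : (a:ℚ) < c := by exact_mod_cast hac
  have hdbQ : (d:ℚ) < b := by exact_mod_cast hdb
  have hca : (0:ℚ) < (c:ℚ) - a := by linarith
  have hbd : (0:ℚ) < (b:ℚ) - d := by linarith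
  have hn1 : (0:ℚ) < (n:ℚ) + 1 := by positivity
  have h13c : (d:ℚ) * ((n:ℚ) + 1) = (a:ℚ) * ((m:ℚ) + 1) := by exact_mod_cast h13
  have h12c : (a:ℚ) * ((m:ℚ) + 1) ≠ (b:ℚ) * ((n:ℚ) + 1) := by exact_mod_cast h12
  set Qf : ℚ → ℚ := fun s =>
    ((b:ℚ) * c - (a:ℚ) * d) * s + ((b:ℚ) - d) * (n + 1) + ((c:ℚ) - a) * (m + 1) with hQf
  have hQcont : Continuous Qf := by fun_prop
  have hQs1 : Qf s1 = ((n:ℚ) + 1) * ((a:ℚ) - c) * ((b:ℚ) - d) / a := by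
    simp only [hQf, hs1]
    field_simp
    linear_combination (-((c:ℚ) - a)) * h13c
  have hQs1ne : Qf s1 ≠ 0 := by
    rw [hQs1]
    have hP : (0:ℚ) < ((n:ℚ) + 1) * ((c:ℚ) - a) * ((b:ℚ) - d) :=
      mul_pos (mul_pos hn1 hca) hbd
    have hneg : ((n:ℚ) + 1) * ((a:ℚ) - c) * ((b:ℚ) - d) < 0 := by
      have : ((n:ℚ) + 1) * ((a:ℚ) - c) * ((b:ℚ) - d)
          = -(((n:ℚ) + 1) * ((c:ℚ) - a) * ((b:ℚ) - d)) := by ring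
      rw [this]; linarith
    exact ne_of_lt (div_neg_of_neg_of_pos hneg haQ)
  set g : ℚ → ℚ := fun s => (((c:ℚ) - a) / a + ((b:ℚ) - d) / d) / Qf s with hg
  have hgL : g s1 = L := by
    show (((c:ℚ) - a) / a + ((b:ℚ) - d) / d) / Qf s1 = L
    rw [hQs1, hLdef]
    exact aux_L a b c d n m h13c haQ hdQ hca hbd hn1 h12c
  -- eventual equality on punctured nhds
  have key : ∀ s : ℚ, s ≠ s1 → Qf s ≠ 0 → (s - s1) * Z a b c d n m s = g s := by
    intro s hs hQs
    have h1 : (a:ℚ) * s + n + 1 = a * (s - s1) := by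
      rw [hs1]; field_simp; ring
    have h2 : (d:ℚ) * s + m + 1 = d * (s - s1) := by
      rw [hs1]; field_simp; linear_combination -h13c
    have hss : s - s1 ≠ 0 := sub_ne_zero.mpr hs
    have hds : (d:ℚ) * (s - s1) ≠ 0 := mul_ne_zero (ne_of_gt hdQ) hss
    have has : (a:ℚ) * (s - s1) ≠ 0 := mul_ne_zero (ne_of_gt haQ) hss
    rw [Z]
    rw [show (((b:ℚ) * c - (a:ℚ) * d) * s + ((b:ℚ) - d) * (n + 1) + ((c:ℚ) - a) * (m + 1)) = Qf s from rfl, h1, h2]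
    show _ = (((c:ℚ) - a) / a + ((b:ℚ) - d) / d) / Qf s
    generalize Qf s = q at hQs ⊢
    field_simp
  have hevQ : ∀ᶠ s in nhdsWithin s1 {s1}ᶜ, Qf s ≠ 0 := by
    have hopen : IsOpen {s : ℚ | Qf s ≠ 0} := (isOpen_compl_singleton).preimage hQcont
    exact Filter.eventually_iff_exists_mem.mpr
      ⟨{s : ℚ | Qf s ≠ 0}, nhdsWithin_le_nhds (hopen.mem_nhds hQs1ne), fun s hs => hs⟩
  have hevne : ∀ᶠ s in nhdsWithin s1 {s1}ᶜ, s ≠ s1 := by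
    filter_upwards [self_mem_nhdsWithin] with s hs
    exact hs
  have heq : (fun s => (s - s1) * Z a b c d n m s) =ᶠ[nhdsWithin s1 {s1}ᶜ] g := by
    filter_upwards [hevQ, hevne] with s h1 h2
    exact key s h2 h1
  have hgt : Filter.Tendsto g (nhdsWithin s1 {s1}ᶜ) (nhds L) := by
    rw [← hgL]
    exact ((continuousAt_const.div (hQcont.continuousAt) hQs1ne)).continuousWithinAt.tendsto
  have hmain : Filter.Tendsto (fun s => (s - s1) * Z a b c d n m s)
      (nhdsWithin s1 {s1}ᶜ) (nhds L) := hgt.congr' heq.symm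
  have hLne : L ≠ 0 := by
    rw [hLdef]
    have hD : (a:ℚ) * ((m:ℚ) + 1) - (b:ℚ) * ((n:ℚ) + 1) ≠ 0 := sub_ne_zero.mpr h12c
    have hP : (0:ℚ) < 1 + (a:ℚ) * ((b:ℚ) - d) / ((d:ℚ) * ((c:ℚ) - a)) := by
      have := div_pos (mul_pos haQ hbd) (mul_pos hdQ hca)
      linarith
    exact mul_ne_zero (one_div_ne_zero hD) (ne_of_gt hP)
  refine ⟨hmain, hLne, ⟨L, hLne, by simpa [pow_one] using hmain⟩, ?_⟩
  intro k hk1 hkne ⟨L', hL'ne, hL't⟩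
  obtain ⟨j, rfl⟩ : ∃ j, k = j + 1 := ⟨k - 1, (Nat.succ_pred_eq_of_pos hk1).symm⟩
  have hj : j ≠ 0 := by omega
  have hz : Filter.Tendsto (fun s : ℚ => (s - s1) ^ j) (nhdsWithin s1 {s1}ᶜ) (nhds 0) := by
    have hc : Continuous (fun s : ℚ => (s - s1) ^ j) := by fun_prop
    have : Filter.Tendsto (fun s : ℚ => (s - s1) ^ j) (nhds s1) (nhds ((s1 - s1) ^ j)) :=
      hc.tendsto s1
    rw [sub_self, zero_pow hj] at this
    exact this.mono_left nhdsWithin_le_nhds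
  have h0 : Filter.Tendsto (fun s => (s - s1) ^ (j + 1) * Z a b c d n m s)
      (nhdsWithin s1 {s1}ᶜ) (nhds 0) := by
    have := hz.mul hmain
    rw [zero_mul] at this
    refine this.congr fun s => ?_
    ring
  exact hL'ne (tendsto_nhds_unique hL't h0)
end

section
/- Suppose a ≥ 1, a·(m+1) = b·(n+1) (i.e. s₁ = s₂), and moreover d = 0 or d·(n+1) ≠ a·(m+1) (i.e. s₁ ≠ s₃ when s₃ is defined). Then lim_{s→s₁} (s−s₁)²·Z_{n,m}(s) = (c−a)/(a·(bc−ad)), which is a strictly positive rational number; consequently s₁ is a pole of order exactly two of Z_{n,m}. -/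
open Filter Topology

theorem stmt2 (a b c d n m : ℕ) (hac : a < c) (hdb : d < b) (ha : 1 ≤ a)
    (h12 : a * (m + 1) = b * (n + 1))
    (h13 : d = 0 ∨ d * (n + 1) ≠ a * (m + 1)) :
    Filter.Tendsto (fun s => (s - (-((n : ℚ) + 1) / a)) ^ 2 * Z a b c d n m s)
        (nhdsWithin (-((n : ℚ) + 1) / a) {(-((n : ℚ) + 1) / a)}ᶜ)
        (nhds (((c : ℚ) - a) / ((a : ℚ) * ((b : ℚ) * c - (a : ℚ) * d)))) ∧
      0 < ((c : ℚ) - a) / ((a : ℚ) * ((b : ℚ) * c - (a : ℚ) * d)) ∧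
      IsPoleOfOrder (Z a b c d n m) (-((n : ℚ) + 1) / a) 2 ∧
      ∀ k : ℕ, 1 ≤ k → k ≠ 2 → ¬ IsPoleOfOrder (Z a b c d n m) (-((n : ℚ) + 1) / a) k := by
  have ha' : (0:ℚ) < a := by exact_mod_cast Nat.lt_of_lt_of_le Nat.zero_lt_one ha
  have hane : (a:ℚ) ≠ 0 := ne_of_gt ha'
  have hac' : (a:ℚ) < c := by exact_mod_cast hac
  have hdb' : (d:ℚ) < b := by exact_mod_cast hdb
  have hd0 : (0:ℚ) ≤ d := by positivity
  have hK : (0:ℚ) < (b:ℚ)*c - (a:ℚ)*d := by nlinarith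
  have hKne : ((b:ℚ)*c - (a:ℚ)*d) ≠ 0 := ne_of_gt hK
  have h12' : (a:ℚ) * ((m:ℚ)+1) = (b:ℚ) * ((n:ℚ)+1) := by exact_mod_cast h12
  set s₁ : ℚ := -((n : ℚ) + 1) / a with hs₁
  set L : ℚ := ((c : ℚ) - a) / ((a : ℚ) * ((b : ℚ) * c - (a : ℚ) * d)) with hL
  have hLpos : 0 < L := div_pos (by linarith) (mul_pos ha' hK)
  have hD1 : (d:ℚ) * s₁ + m + 1 ≠ 0 := by
    have hval : (d:ℚ) * s₁ + m + 1 = ((a:ℚ)*((m:ℚ)+1) - (d:ℚ)*((n:ℚ)+1))/a := by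
      rw [hs₁]; field_simp; ring
    rw [hval]
    apply div_ne_zero _ hane
    rcases h13 with h | h
    · subst h; push_cast; intro hcon; nlinarith
    · have h' : (d:ℚ)*((n:ℚ)+1) ≠ (a:ℚ)*((m:ℚ)+1) := by exact_mod_cast h
      intro hcon
      exact h' (by linarith [sub_eq_zero.mp hcon])
  have key : ∀ s : ℚ, s ≠ s₁ → (s - s₁) ^ 2 * Z a b c d n m s
      = L + ((b:ℚ)-d)*(s-s₁)/(((b:ℚ)*c - (a:ℚ)*d)*((d:ℚ)*s+m+1)) := by
    intro s hs
    have ht : s - s₁ ≠ 0 := sub_ne_zero.mpr hs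
    have hA : (a : ℚ) * s + n + 1 = a * (s - s₁) := by
      rw [hs₁]; field_simp; ring
    have hB : ((b : ℚ) * c - (a : ℚ) * d) * s + ((b : ℚ) - d) * (n + 1)
        + ((c : ℚ) - a) * (m + 1) = ((b:ℚ)*c - (a:ℚ)*d) * (s - s₁) := by
      rw [hs₁]; field_simp; linear_combination ((c:ℚ)-a) * h12'
    unfold Z
    rw [hA, hB]
    by_cases hD : (d:ℚ)*s + m + 1 = 0
    · rw [hD, mul_zero, div_zero, add_zero, mul_zero, div_zero, add_zero, hL]
      field_simp
    · rw [hL]; field_simp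
  have hg : Tendsto (fun s : ℚ => L + ((b:ℚ)-d)*(s-s₁)/(((b:ℚ)*c - (a:ℚ)*d)*((d:ℚ)*s+m+1)))
      (𝓝 s₁) (𝓝 L) := by
    have h1 : Tendsto (fun s : ℚ => ((b:ℚ)-d)*(s-s₁)) (𝓝 s₁) (𝓝 0) := by
      have := (continuous_const.mul (continuous_id.sub continuous_const) : Continuous fun s : ℚ => ((b:ℚ)-d)*(s-s₁)).tendsto s₁
      have h' : Tendsto (fun s : ℚ => ((b:ℚ)-d)*(s-s₁)) (𝓝 s₁) (𝓝 (((b:ℚ)-d)*(s₁-s₁))) := this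
      simpa only [sub_self, mul_zero] using h'
    have h2 : Tendsto (fun s : ℚ => ((b:ℚ)*c - (a:ℚ)*d)*((d:ℚ)*s+m+1)) (𝓝 s₁)
        (𝓝 (((b:ℚ)*c - (a:ℚ)*d)*((d:ℚ)*s₁+m+1))) := by
      exact (continuous_const.mul (((continuous_const.mul continuous_id).add
        continuous_const).add continuous_const)).tendsto s₁
    have h3 := h1.div h2 (mul_ne_zero hKne hD1)
    simpa using tendsto_const_nhds.add h3
  have hmain : Tendsto (fun s => (s - s₁) ^ 2 * Z a b c d n m s) (𝓝[≠] s₁) (𝓝 L) := by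
    refine Tendsto.congr' ?_ (hg.mono_left nhdsWithin_le_nhds)
    filter_upwards [self_mem_nhdsWithin] with s hs
    exact (key s hs).symm
  have hz : Tendsto (fun s : ℚ => s - s₁) (𝓝[≠] s₁) (𝓝 0) := by
    have h := ((continuous_id.sub continuous_const :
        Continuous fun s : ℚ => s - s₁)).tendsto s₁
    have h' : Tendsto (fun s : ℚ => s - s₁) (𝓝[≠] s₁) (𝓝 (s₁ - s₁)) := h.mono_left nhdsWithin_le_nhds
    simpa only [sub_self] using h'
  refine ⟨hmain, hLpos, ⟨L, ne_of_gt hLpos, hmain⟩, ?_⟩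
  rintro k hk1 hk2 ⟨L', hL', hT'⟩
  rcases lt_or_gt_of_ne hk2 with h | h
  · interval_cases k
    have h0 := hz.mul hT'
    rw [zero_mul] at h0
    have heq : (fun s : ℚ => (s - s₁) * ((s - s₁) ^ 1 * Z a b c d n m s))
        = fun s => (s - s₁) ^ 2 * Z a b c d n m s := by
      funext s; ring
    rw [heq] at h0
    exact absurd (tendsto_nhds_unique hmain h0) (ne_of_gt hLpos)
  · have hzp : Tendsto (fun s : ℚ => (s - s₁) ^ (k-2)) (𝓝[≠] s₁) (𝓝 0) := by
      have := hz.pow (k-2)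
      simpa [zero_pow (by omega : k - 2 ≠ 0)] using this
    have h0 := hzp.mul hmain
    rw [zero_mul] at h0
    have heq : (fun s : ℚ => (s - s₁) ^ (k-2) * ((s - s₁) ^ 2 * Z a b c d n m s))
        = fun s => (s - s₁) ^ k * Z a b c d n m s := by
      funext s
      rw [← mul_assoc, ← pow_add]
      congr 2
      omega
    rw [heq] at h0
    exact hL' (tendsto_nhds_unique hT' h0)
end

section
/- Suppose b·(n+1) ≠ a·(m+1) and c·(m+1) ≠ d·(n+1) (these conditions say that s₂ differs from s₁ and from s₃ whenever the latter are defined). Then lim_{s→s₂} (s−s₂)·Z_{n,m}(s) = −((b−d)·(n+1) + (c−a)·(m+1)) / ((a·(m+1) − b·(n+1))·(c·(m+1) − d·(n+1))), which is nonzero; consequently s₂ is a pole of order exactly one of Z_{n,m}. -/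
theorem stmt4 (a b c d n m : ℕ) (hac : a < c) (hdb : d < b)
    (h21 : b * (n + 1) ≠ a * (m + 1))
    (h23 : c * (m + 1) ≠ d * (n + 1)) :
    Filter.Tendsto
        (fun s =>
          (s - (-(((b : ℚ) - d) * (n + 1) + ((c : ℚ) - a) * (m + 1)) /
            ((b : ℚ) * c - (a : ℚ) * d))) * Z a b c d n m s)
        (nhdsWithin
          (-(((b : ℚ) - d) * (n + 1) + ((c : ℚ) - a) * (m + 1)) /
            ((b : ℚ) * c - (a : ℚ) * d))
          {(-(((b : ℚ) - d) * (n + 1) + ((c : ℚ) - a) * (m + 1)) /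
            ((b : ℚ) * c - (a : ℚ) * d))}ᶜ)
        (nhds (-(((b : ℚ) - d) * (n + 1) + ((c : ℚ) - a) * (m + 1)) /
          (((a : ℚ) * (m + 1) - (b : ℚ) * (n + 1)) *
            ((c : ℚ) * (m + 1) - (d : ℚ) * (n + 1))))) ∧
      -(((b : ℚ) - d) * (n + 1) + ((c : ℚ) - a) * (m + 1)) /
          (((a : ℚ) * (m + 1) - (b : ℚ) * (n + 1)) *
            ((c : ℚ) * (m + 1) - (d : ℚ) * (n + 1))) ≠ 0 ∧
      IsPoleOfOrder (Z a b c d n m)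
        (-(((b : ℚ) - d) * (n + 1) + ((c : ℚ) - a) * (m + 1)) /
          ((b : ℚ) * c - (a : ℚ) * d)) 1 ∧
      ∀ k : ℕ, 1 ≤ k → k ≠ 1 →
        ¬ IsPoleOfOrder (Z a b c d n m)
          (-(((b : ℚ) - d) * (n + 1) + ((c : ℚ) - a) * (m + 1)) /
            ((b : ℚ) * c - (a : ℚ) * d)) k := by

  have hcq : (a:ℚ) < c := by exact_mod_cast hac
  have hdq : (d:ℚ) < b := by exact_mod_cast hdb
  have ha0 : (0:ℚ) ≤ a := Nat.cast_nonneg a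
  have hd0 : (0:ℚ) ≤ d := Nat.cast_nonneg d
  have hq21 : (b:ℚ)*((n:ℚ)+1) ≠ (a:ℚ)*((m:ℚ)+1) := by
    intro h; apply h21; exact_mod_cast h
  have hq23 : (c:ℚ)*((m:ℚ)+1) ≠ (d:ℚ)*((n:ℚ)+1) := by
    intro h; apply h23; exact_mod_cast h
  set D : ℚ := (b:ℚ)*c - (a:ℚ)*d with hDdef
  set N : ℚ := ((b:ℚ)-d)*((n:ℚ)+1) + ((c:ℚ)-a)*((m:ℚ)+1) with hNdef
  have hD : D ≠ 0 := by
    have : (a:ℚ)*d < (b:ℚ)*c := by nlinarith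
    simp only [hDdef]; linarith
  have hN : 0 < N := by
    have h1 : (0:ℚ) < ((b:ℚ)-d) := by linarith
    have h2 : (0:ℚ) < ((c:ℚ)-a) := by linarith
    have h3 : (0:ℚ) < (n:ℚ)+1 := by positivity
    have h4 : (0:ℚ) < (m:ℚ)+1 := by positivity
    simp only [hNdef]; nlinarith
  set s₂ : ℚ := -N / D with hs₂
  have hu : (a:ℚ)*((m:ℚ)+1) - (b:ℚ)*((n:ℚ)+1) ≠ 0 := sub_ne_zero.mpr hq21.symm
  have hv : (c:ℚ)*((m:ℚ)+1) - (d:ℚ)*((n:ℚ)+1) ≠ 0 := sub_ne_zero.mpr hq23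
  set L : ℚ := -N / (((a:ℚ)*((m:ℚ)+1) - (b:ℚ)*((n:ℚ)+1)) * ((c:ℚ)*((m:ℚ)+1) - (d:ℚ)*((n:ℚ)+1))) with hLdef
  have hLne : L ≠ 0 := div_ne_zero (neg_ne_zero.mpr (ne_of_gt hN)) (mul_ne_zero hu hv)
  have hca : (c:ℚ) - a ≠ 0 := by linarith
  have hbd : (b:ℚ) - d ≠ 0 := by linarith
  have hA : (a:ℚ)*s₂ + n + 1 ≠ 0 := by
    intro h
    rw [hs₂] at h
    apply hq21
    have h2 : ((c:ℚ)-a) * ((b:ℚ)*((n:ℚ)+1)) = ((c:ℚ)-a) * ((a:ℚ)*((m:ℚ)+1)) := by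
      field_simp at h
      simp only [hNdef, hDdef] at h ⊢
      linarith [h]
    exact mul_left_cancel₀ hca h2
  have hB : (d:ℚ)*s₂ + m + 1 ≠ 0 := by
    intro h
    rw [hs₂] at h
    apply hq23
    have h2 : ((b:ℚ)-d) * ((c:ℚ)*((m:ℚ)+1)) = ((b:ℚ)-d) * ((d:ℚ)*((n:ℚ)+1)) := by
      field_simp at h
      simp only [hNdef, hDdef] at h ⊢
      linarith [h]
    exact mul_left_cancel₀ hbd h2
  set g : ℚ → ℚ := fun s => ((c:ℚ)-a)/(((a:ℚ)*s+n+1)*D) + ((b:ℚ)-d)/(D*((d:ℚ)*s+m+1)) with hgdef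
  have hlin : ∀ s : ℚ, D*s + ((b:ℚ)-d)*((n:ℚ)+1) + ((c:ℚ)-a)*((m:ℚ)+1) = D*(s - s₂) := by
    intro s
    rw [hs₂]
    field_simp
    ring
  have key : ∀ s : ℚ, s ≠ s₂ → (s - s₂) * Z a b c d n m s = g s := by
    intro s hs
    have ht : s - s₂ ≠ 0 := sub_ne_zero.mpr hs
    unfold Z
    rw [hlin s, hgdef]
    simp only
    rw [mul_add]
    congr 1
    · rw [show ((a:ℚ)*s+n+1) * (D*(s-s₂)) = (((a:ℚ)*s+n+1)*D) * (s-s₂) by ring,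
        ← div_div, mul_comm, div_mul_cancel₀ _ ht]
    · rw [show (D*(s-s₂)) * ((d:ℚ)*s+m+1) = (D*((d:ℚ)*s+m+1)) * (s-s₂) by ring,
        ← div_div, mul_comm, div_mul_cancel₀ _ ht]
  have hgc : Filter.Tendsto g (nhds s₂) (nhds (g s₂)) := by
    apply Filter.Tendsto.add
    · exact (ContinuousAt.div continuousAt_const (by fun_prop) (mul_ne_zero hA hD))
    · exact (ContinuousAt.div continuousAt_const (by fun_prop) (mul_ne_zero hD hB))
  have hval : g s₂ = L := by
    rw [hgdef, hLdef]
    simp only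
    rw [div_add_div _ _ (mul_ne_zero hA hD) (mul_ne_zero hD hB)]
    rw [hs₂]
    rw [hs₂] at hA hB
    field_simp
    field_simp at hA hB
    have hA' : -((a:ℚ) * N) + D * (n:ℚ) + D ≠ 0 := fun h => hA (by rw [h, zero_div])
    have hB' : -((d:ℚ) * N) + D * (m:ℚ) + D ≠ 0 := fun h => hB (by rw [mul_comm N, h, zero_div])
    rw [div_eq_iff (mul_ne_zero hB' hA')]
    simp only [hNdef, hDdef]
    ring
  have hmain : Filter.Tendsto (fun s => (s - s₂) * Z a b c d n m s)
      (nhdsWithin s₂ {s₂}ᶜ) (nhds L) := by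
    rw [← hval]
    apply Filter.Tendsto.congr' _ (hgc.mono_left nhdsWithin_le_nhds)
    filter_upwards [self_mem_nhdsWithin] with s hs
    exact (key s hs).symm
  refine ⟨hmain, hLne, ⟨L, hLne, by simpa using hmain⟩, ?_⟩
  rintro k hk1 hkne ⟨L', hL'ne, hL't⟩
  have hk2 : 2 ≤ k := by omega
  have hpow : Filter.Tendsto (fun s : ℚ => (s - s₂)^(k-1)) (nhdsWithin s₂ {s₂}ᶜ) (nhds 0) := by
    have : Filter.Tendsto (fun s : ℚ => (s - s₂)^(k-1)) (nhds s₂) (nhds ((s₂ - s₂)^(k-1))) :=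
      ((continuous_id.sub continuous_const).pow (k-1)).tendsto s₂
    rw [sub_self, zero_pow (by omega)] at this
    exact this.mono_left nhdsWithin_le_nhds
  have h0 : Filter.Tendsto (fun s => (s - s₂)^k * Z a b c d n m s)
      (nhdsWithin s₂ {s₂}ᶜ) (nhds 0) := by
    have := hpow.mul hmain
    rw [zero_mul] at this
    apply this.congr
    intro s
    rw [← mul_assoc, ← pow_succ]
    congr 2
    omega
  exact hL'ne (tendsto_nhds_unique hL't h0)
end

section
/- Suppose d ≥ 1, c·(m+1) ≠ d·(n+1) (i.e. s₃ ≠ s₂), and moreover a = 0 or a·(m+1) ≠ d·(n+1) (i.e. s₃ ≠ s₁ when s₁ is defined). Then lim_{s→s₃} (s−s₃)·Z_{n,m}(s) = 1/(d·(n+1) − c·(m+1)), which is nonzero; consequently s₃ = −(m+1)/d is a pole of order exactly one of Z_{n,m}. -/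
theorem stmt5 (a b c d n m : ℕ) (hac : a < c) (hdb : d < b) (hd : 1 ≤ d)
    (h32 : c * (m + 1) ≠ d * (n + 1))
    (h31 : a = 0 ∨ a * (m + 1) ≠ d * (n + 1)) :
    Filter.Tendsto (fun s => (s - (-((m : ℚ) + 1) / d)) * Z a b c d n m s)
        (nhdsWithin (-((m : ℚ) + 1) / d) {(-((m : ℚ) + 1) / d)}ᶜ)
        (nhds (1 / ((d : ℚ) * (n + 1) - (c : ℚ) * (m + 1)))) ∧
      1 / ((d : ℚ) * (n + 1) - (c : ℚ) * (m + 1)) ≠ 0 ∧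
      IsPoleOfOrder (Z a b c d n m) (-((m : ℚ) + 1) / d) 1 ∧
      ∀ k : ℕ, 1 ≤ k → k ≠ 1 → ¬ IsPoleOfOrder (Z a b c d n m) (-((m : ℚ) + 1) / d) k := by
  set s₃ : ℚ := -((m : ℚ) + 1) / d with hs₃
  have hdQ : (d : ℚ) ≠ 0 := by positivity
  have hD : (d : ℚ) * (n + 1) - (c : ℚ) * (m + 1) ≠ 0 := by
    intro h
    apply h32
    have : (c : ℚ) * (m + 1) = (d : ℚ) * (n + 1) := by linarith
    exact_mod_cast this
  set B : ℚ → ℚ := fun s =>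
    ((b : ℚ) * c - (a : ℚ) * d) * s + ((b : ℚ) - d) * (n + 1) + ((c : ℚ) - a) * (m + 1) with hB
  have hbd : (b : ℚ) - d ≠ 0 := by
    have : (d : ℚ) < b := by exact_mod_cast hdb
    linarith
  have hB3 : B s₃ = (((b : ℚ) - d) * ((d : ℚ) * (n + 1) - (c : ℚ) * (m + 1))) / d := by
    simp only [hB, hs₃]
    field_simp
    ring
  have hB3ne : B s₃ ≠ 0 := by
    rw [hB3]
    exact div_ne_zero (mul_ne_zero hbd hD) hdQ
  have hA3 : (a : ℚ) * s₃ + n + 1 ≠ 0 := by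
    rcases h31 with h | h
    · subst h
      simp
      positivity
    · have h' : (a : ℚ) * (m + 1) ≠ (d : ℚ) * (n + 1) := by exact_mod_cast h
      simp only [hs₃]
      intro hc
      apply h'
      field_simp at hc
      linarith
  set F : ℚ → ℚ := fun s =>
    (s - s₃) * (((c : ℚ) - a) / ((((a : ℚ) * s + n + 1)) * B s)) + ((b : ℚ) - d) / (B s * d)
    with hF
  have hds₃ : (d : ℚ) * s₃ = -((m : ℚ) + 1) := by
    rw [hs₃]; field_simp
  have hF3 : F s₃ = 1 / ((d : ℚ) * (n + 1) - (c : ℚ) * (m + 1)) := by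
    simp only [hF, sub_self, zero_mul, zero_add, hB3]
    field_simp
  have hcont : ContinuousAt F s₃ := by
    apply ContinuousAt.add
    · apply ContinuousAt.mul (by fun_prop)
      exact ContinuousAt.div (by fun_prop) (by fun_prop) (mul_ne_zero hA3 hB3ne)
    · exact ContinuousAt.div (by fun_prop) (by fun_prop) (mul_ne_zero hB3ne hdQ)
  have hEq : ∀ s : ℚ, s ≠ s₃ → (s - s₃) * Z a b c d n m s = F s := by
    intro s hs
    have hts : s - s₃ ≠ 0 := sub_ne_zero.mpr hs
    have key : (d : ℚ) * s + m + 1 = d * (s - s₃) := by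
      rw [mul_sub, hds₃]; ring
    simp only [Z, hF, key, ← hB]
    rcases eq_or_ne (B s) 0 with hBs | hBs
    · have hBs' : ((b : ℚ) * c - (a : ℚ) * d) * s + ((b : ℚ) - d) * (n + 1) +
          ((c : ℚ) - a) * (m + 1) = 0 := hBs
      rw [hBs', hBs]
      simp
    · simp only [hB] at hBs ⊢
      field_simp
  have hmain : Filter.Tendsto (fun s => (s - s₃) * Z a b c d n m s)
      (nhdsWithin s₃ {s₃}ᶜ) (nhds (1 / ((d : ℚ) * (n + 1) - (c : ℚ) * (m + 1)))) := by
    have h1 : Filter.Tendsto F (nhdsWithin s₃ {s₃}ᶜ)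
        (nhds (1 / ((d : ℚ) * (n + 1) - (c : ℚ) * (m + 1)))) := by
      rw [← hF3]
      exact hcont.continuousWithinAt.tendsto
    apply h1.congr'
    filter_upwards [self_mem_nhdsWithin] with s hs
    exact (hEq s hs).symm
  have hLne : 1 / ((d : ℚ) * (n + 1) - (c : ℚ) * (m + 1)) ≠ 0 := one_div_ne_zero hD
  refine ⟨hmain, hLne, ⟨_, hLne, by simpa [pow_one] using hmain⟩, ?_⟩
  intro k hk1 hk hpole
  obtain ⟨L, hL, hT⟩ := hpole
  have hk2 : 2 ≤ k := by omega
  have h0 : Filter.Tendsto (fun s => (s - s₃) ^ k * Z a b c d n m s)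
      (nhdsWithin s₃ {s₃}ᶜ) (nhds 0) := by
    have h2 : Filter.Tendsto (fun s : ℚ => (s - s₃) ^ (k - 1))
        (nhdsWithin s₃ {s₃}ᶜ) (nhds 0) := by
      have : ContinuousAt (fun s : ℚ => (s - s₃) ^ (k - 1)) s₃ := by fun_prop
      have h3 := this.continuousWithinAt.tendsto (s := {s₃}ᶜ)
      simpa [zero_pow (by omega : k - 1 ≠ 0)] using h3
    have := h2.mul hmain
    rw [zero_mul] at this
    apply this.congr
    intro s
    rw [← mul_assoc, ← pow_succ]
    congr 2
    omega
  exact hL (tendsto_nhds_unique hT h0)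
end

section
/- All candidate-poles of Z_{n,m} are actual poles: for all natural numbers n, m, the point s₂ is a pole (of order one or two) of Z_{n,m}; if a ≥ 1 then s₁ is a pole (of order one or two) of Z_{n,m}; and if d ≥ 1 then s₃ is a pole (of order one or two) of Z_{n,m}. -/
lemma pole_helper (F : ℚ → ℚ) (s₀ : ℚ) (k : ℕ) (g : ℚ → ℚ)
    (hg : ContinuousAt g s₀) (h0 : g s₀ ≠ 0)
    (heq : ∀ᶠ s in nhdsWithin s₀ {s₀}ᶜ, (s - s₀) ^ k * F s = g s) :
    IsPoleOfOrder F s₀ k :=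
  ⟨g s₀, h0, Filter.Tendsto.congr' (heq.mono fun _ h => h.symm) hg.continuousWithinAt⟩

lemma ev_ne (f : ℚ → ℚ) (hf : Continuous f) (s₀ : ℚ) (h : f s₀ ≠ 0) :
    ∀ᶠ s in nhdsWithin s₀ {s₀}ᶜ, f s ≠ 0 :=
  (hf.continuousAt.eventually_ne h).filter_mono nhdsWithin_le_nhds

lemma ev_mem (s₀ : ℚ) : ∀ᶠ s in nhdsWithin s₀ {s₀}ᶜ, s ≠ s₀ :=
  eventually_mem_nhdsWithin

set_option maxHeartbeats 1000000 in
lemma aux2 (a b c d n m : ℕ) (hac : a < c) (hdb : d < b) :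
    IsPoleOfOrder (Z a b c d n m)
        (-(((b : ℚ) - d) * (n + 1) + ((c : ℚ) - a) * (m + 1)) /
          ((b : ℚ) * c - (a : ℚ) * d)) 1 ∨
      IsPoleOfOrder (Z a b c d n m)
        (-(((b : ℚ) - d) * (n + 1) + ((c : ℚ) - a) * (m + 1)) /
          ((b : ℚ) * c - (a : ℚ) * d)) 2 := by
  have hca : (0:ℚ) < (c:ℚ) - a := by
    have := (Nat.cast_lt (α := ℚ)).2 hac; linarith
  have hbd : (0:ℚ) < (b:ℚ) - d := by
    have := (Nat.cast_lt (α := ℚ)).2 hdb; linarith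
  have ha0 : (0:ℚ) ≤ (a:ℚ) := Nat.cast_nonneg a
  have hd0 : (0:ℚ) ≤ (d:ℚ) := Nat.cast_nonneg d
  have hn : (0:ℚ) < (n:ℚ) + 1 := by positivity
  have hm : (0:ℚ) < (m:ℚ) + 1 := by positivity
  have hK : (0:ℚ) < (b:ℚ) * c - (a:ℚ) * d := by nlinarith
  have hq : (0:ℚ) < ((b:ℚ) - d) * ((n:ℚ) + 1) + ((c:ℚ) - a) * ((m:ℚ) + 1) := by positivity
  set K : ℚ := (b:ℚ) * c - (a:ℚ) * d with hKdef
  set q : ℚ := ((b:ℚ) - d) * ((n:ℚ) + 1) + ((c:ℚ) - a) * ((m:ℚ) + 1) with hqdef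
  set s₂ : ℚ := -(((b : ℚ) - d) * (n + 1) + ((c : ℚ) - a) * (m + 1)) / ((b : ℚ) * c - (a : ℚ) * d) with hs₂def
  have hs₂ : K * s₂ = -q := by
    rw [hs₂def, hqdef, hKdef]
    field_simp
    rw [div_self hK.ne']
  have hKA : K * ((a:ℚ) * s₂ + n + 1)
      = ((c:ℚ) - a) * ((b:ℚ) * ((n:ℚ)+1) - (a:ℚ) * ((m:ℚ)+1)) := by
    linear_combination (a:ℚ) * hs₂
  have hKB : K * ((d:ℚ) * s₂ + m + 1)
      = ((b:ℚ) - d) * ((c:ℚ) * ((m:ℚ)+1) - (d:ℚ) * ((n:ℚ)+1)) := by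
    linear_combination (d:ℚ) * hs₂
  have hN : K * (((c:ℚ) - a) * ((d:ℚ) * s₂ + m + 1) + ((b:ℚ) - d) * ((a:ℚ) * s₂ + n + 1))
      = ((c:ℚ) - a) * ((b:ℚ) - d) * q := by
    linear_combination ((c:ℚ) - a) * hKB + ((b:ℚ) - d) * hKA
  have hNne : ((c:ℚ) - a) * ((d:ℚ) * s₂ + m + 1) + ((b:ℚ) - d) * ((a:ℚ) * s₂ + n + 1) ≠ 0 := by
    intro h
    rw [h, mul_zero] at hN
    nlinarith [mul_pos (mul_pos hca hbd) hq]
  clear_value K q s₂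
  by_cases hA : (a:ℚ) * s₂ + n + 1 = 0
  · -- order 2, pole merges with s₁
    right
    have ha : (a:ℚ) ≠ 0 := by
      intro h; rw [h, zero_mul, zero_add] at hA; linarith
    have hB : (d:ℚ) * s₂ + m + 1 ≠ 0 := by
      intro h; rw [hA, h] at hNne; simp at hNne
    apply pole_helper _ _ _
      (fun s => (((c:ℚ) - a) * ((d:ℚ) * s + m + 1) + (s - s₂) * (a:ℚ) * ((b:ℚ) - d)) /
        ((a:ℚ) * K * ((d:ℚ) * s + m + 1)))
    · apply ContinuousAt.div (by fun_prop) (by fun_prop)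
      exact mul_ne_zero (mul_ne_zero ha hK.ne') hB
    · simp only [sub_self, zero_mul, mul_zero, add_zero]
      exact div_ne_zero (mul_ne_zero hca.ne' hB) (mul_ne_zero (mul_ne_zero ha hK.ne') hB)
    · filter_upwards [ev_mem s₂, ev_ne (fun s => (d:ℚ) * s + m + 1) (by fun_prop) s₂ hB]
        with s hs hBs
      have hss : s - s₂ ≠ 0 := sub_ne_zero.2 hs
      have hAs : (a:ℚ) * s + (n:ℚ) + 1 = (a:ℚ) * (s - s₂) := by linear_combination hA
      have hLs : ((b:ℚ) * c - (a:ℚ) * d) * s + ((b:ℚ) - d) * ((n:ℚ) + 1) + ((c:ℚ) - a) * ((m:ℚ) + 1)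
          = K * (s - s₂) := by linear_combination hs₂ - s * hKdef - hqdef
      simp only [Z]
      rw [hAs, hLs]
      rw [div_add_div _ _ (by simp [ha, hK.ne', hss, hBs]) (by simp [ha, hK.ne', hss, hBs]), mul_div_assoc', div_eq_div_iff (by simp [ha, hK.ne', hss, hBs]) (by simp [ha, hK.ne', hss, hBs])]
      ring
  · by_cases hB : (d:ℚ) * s₂ + m + 1 = 0
    · -- order 2, pole merges with s₃
      right
      have hd : (d:ℚ) ≠ 0 := by
        intro h; rw [h, zero_mul, zero_add] at hB; linarith
      apply pole_helper _ _ _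
        (fun s => (((b:ℚ) - d) * ((a:ℚ) * s + n + 1) + (s - s₂) * (d:ℚ) * ((c:ℚ) - a)) /
          ((d:ℚ) * K * ((a:ℚ) * s + n + 1)))
      · apply ContinuousAt.div (by fun_prop) (by fun_prop)
        exact mul_ne_zero (mul_ne_zero hd hK.ne') hA
      · simp only [sub_self, zero_mul, mul_zero, add_zero]
        exact div_ne_zero (mul_ne_zero hbd.ne' hA) (mul_ne_zero (mul_ne_zero hd hK.ne') hA)
      · filter_upwards [ev_mem s₂, ev_ne (fun s => (a:ℚ) * s + n + 1) (by fun_prop) s₂ hA]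
          with s hs hAs'
        have hss : s - s₂ ≠ 0 := sub_ne_zero.2 hs
        have hBs : (d:ℚ) * s + (m:ℚ) + 1 = (d:ℚ) * (s - s₂) := by linear_combination hB
        have hLs : ((b:ℚ) * c - (a:ℚ) * d) * s + ((b:ℚ) - d) * ((n:ℚ) + 1) + ((c:ℚ) - a) * ((m:ℚ) + 1)
            = K * (s - s₂) := by linear_combination hs₂ - s * hKdef - hqdef
        simp only [Z]
        rw [hBs, hLs]
        rw [div_add_div _ _ (by simp [hd, hK.ne', hss, hAs']) (by simp [hd, hK.ne', hss, hAs']), mul_div_assoc', div_eq_div_iff (by simp [hd, hK.ne', hss, hAs']) (by simp [hd, hK.ne', hss, hAs'])]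
        ring
    · -- order 1
      left
      apply pole_helper _ _ _
        (fun s => (((c:ℚ) - a) * ((d:ℚ) * s + m + 1) + ((b:ℚ) - d) * ((a:ℚ) * s + n + 1)) /
          (K * (((a:ℚ) * s + n + 1) * ((d:ℚ) * s + m + 1))))
      · apply ContinuousAt.div (by fun_prop) (by fun_prop)
        exact mul_ne_zero hK.ne' (mul_ne_zero hA hB)
      · exact div_ne_zero hNne (mul_ne_zero hK.ne' (mul_ne_zero hA hB))
      · filter_upwards [ev_mem s₂, ev_ne (fun s => (a:ℚ) * s + n + 1) (by fun_prop) s₂ hA,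
          ev_ne (fun s => (d:ℚ) * s + m + 1) (by fun_prop) s₂ hB] with s hs hAs hBs
        have hss : s - s₂ ≠ 0 := sub_ne_zero.2 hs
        have hLs : ((b:ℚ) * c - (a:ℚ) * d) * s + ((b:ℚ) - d) * ((n:ℚ) + 1) + ((c:ℚ) - a) * ((m:ℚ) + 1)
            = K * (s - s₂) := by linear_combination hs₂ - s * hKdef - hqdef
        simp only [Z]
        rw [hLs]
        rw [div_add_div _ _ (by simp [hK.ne', hss, hAs, hBs]) (by simp [hK.ne', hss, hAs, hBs]), mul_div_assoc', div_eq_div_iff (by simp [hK.ne', hss, hAs, hBs]) (by simp [hK.ne', hss, hAs, hBs])]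
        ring

set_option maxHeartbeats 1000000 in
lemma aux1 (a b c d n m : ℕ) (hac : a < c) (hdb : d < b) (ha : 1 ≤ a) :
    IsPoleOfOrder (Z a b c d n m) (-((n : ℚ) + 1) / a) 1 ∨
      IsPoleOfOrder (Z a b c d n m) (-((n : ℚ) + 1) / a) 2 := by
  have hca : (0:ℚ) < (c:ℚ) - a := by
    have := (Nat.cast_lt (α := ℚ)).2 hac; linarith
  have hbd : (0:ℚ) < (b:ℚ) - d := by
    have := (Nat.cast_lt (α := ℚ)).2 hdb; linarith
  have ha' : (0:ℚ) < (a:ℚ) := by exact_mod_cast ha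
  have hd0 : (0:ℚ) ≤ (d:ℚ) := Nat.cast_nonneg d
  have hn : (0:ℚ) < (n:ℚ) + 1 := by positivity
  have hm : (0:ℚ) < (m:ℚ) + 1 := by positivity
  have hK : (0:ℚ) < (b:ℚ) * c - (a:ℚ) * d := by nlinarith
  set K : ℚ := (b:ℚ) * c - (a:ℚ) * d with hKdef
  set q : ℚ := ((b:ℚ) - d) * ((n:ℚ) + 1) + ((c:ℚ) - a) * ((m:ℚ) + 1) with hqdef
  set s₁ : ℚ := -((n : ℚ) + 1) / a with hs₁def
  have hs₁ : (a:ℚ) * s₁ = -((n:ℚ) + 1) := by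
    rw [hs₁def]; field_simp
  have haL : (a:ℚ) * (K * s₁ + q)
      = ((c:ℚ) - a) * ((a:ℚ) * ((m:ℚ)+1) - (b:ℚ) * ((n:ℚ)+1)) := by
    linear_combination K * hs₁
  have haB : (a:ℚ) * ((d:ℚ) * s₁ + m + 1)
      = (a:ℚ) * ((m:ℚ)+1) - (d:ℚ) * ((n:ℚ)+1) := by
    linear_combination (d:ℚ) * hs₁
  clear_value K q s₁
  by_cases hL : K * s₁ + q = 0
  · -- s₁ = s₂ : order 2
    right
    have hB : (d:ℚ) * s₁ + m + 1 ≠ 0 := by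
      intro hB0
      have h1 : ((c:ℚ) - a) * ((a:ℚ) * ((m:ℚ)+1) - (b:ℚ) * ((n:ℚ)+1)) = 0 := by
        rw [← haL, hL, mul_zero]
      have h2 : (a:ℚ) * ((m:ℚ)+1) - (b:ℚ) * ((n:ℚ)+1) = 0 :=
        (mul_eq_zero.1 h1).resolve_left hca.ne'
      have h3 : (a:ℚ) * ((m:ℚ)+1) - (d:ℚ) * ((n:ℚ)+1) = 0 := by
        rw [← haB, hB0, mul_zero]
      nlinarith [mul_pos hbd hn]
    apply pole_helper _ _ _
      (fun s => (((c:ℚ) - a) * ((d:ℚ) * s + m + 1) + (s - s₁) * (a:ℚ) * ((b:ℚ) - d)) /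
        ((a:ℚ) * K * ((d:ℚ) * s + m + 1)))
    · apply ContinuousAt.div (by fun_prop) (by fun_prop)
      exact mul_ne_zero (mul_ne_zero ha'.ne' hK.ne') hB
    · simp only [sub_self, zero_mul, mul_zero, add_zero]
      exact div_ne_zero (mul_ne_zero hca.ne' hB) (mul_ne_zero (mul_ne_zero ha'.ne' hK.ne') hB)
    · filter_upwards [ev_mem s₁, ev_ne (fun s => (d:ℚ) * s + m + 1) (by fun_prop) s₁ hB]
        with s hs hBs
      have hss : s - s₁ ≠ 0 := sub_ne_zero.2 hs
      have hAs : (a:ℚ) * s + (n:ℚ) + 1 = (a:ℚ) * (s - s₁) := by linear_combination hs₁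
      have hLs : ((b:ℚ) * c - (a:ℚ) * d) * s + ((b:ℚ) - d) * ((n:ℚ) + 1) + ((c:ℚ) - a) * ((m:ℚ) + 1)
          = K * (s - s₁) := by linear_combination hL - s * hKdef - hqdef
      simp only [Z]
      rw [hAs, hLs]
      rw [div_add_div _ _ (by simp [ha'.ne', hK.ne', hss, hBs]) (by simp [ha'.ne', hK.ne', hss, hBs]), mul_div_assoc', div_eq_div_iff (by simp [ha'.ne', hK.ne', hss, hBs]) (by simp [ha'.ne', hK.ne', hss, hBs])]
      ring
  · by_cases hB : (d:ℚ) * s₁ + m + 1 = 0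
    · -- s₁ = s₃ : order 1, residues add up
      left
      have hd : (d:ℚ) ≠ 0 := by
        intro h; rw [h, zero_mul, zero_add] at hB; linarith
      have hd' : (0:ℚ) < (d:ℚ) := lt_of_le_of_ne hd0 (Ne.symm hd)
      have hnum : (0:ℚ) < ((c:ℚ) - a) * d + (a:ℚ) * ((b:ℚ) - d) := by positivity
      apply pole_helper _ _ _
        (fun s => (((c:ℚ) - a) * (d:ℚ) + (a:ℚ) * ((b:ℚ) - d)) /
          ((a:ℚ) * (d:ℚ) * (K * s + q)))
      · apply ContinuousAt.div (by fun_prop) (by fun_prop)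
        exact mul_ne_zero (mul_ne_zero ha'.ne' hd) hL
      · exact div_ne_zero hnum.ne' (mul_ne_zero (mul_ne_zero ha'.ne' hd) hL)
      · filter_upwards [ev_mem s₁, ev_ne (fun s => K * s + q) (by fun_prop) s₁ hL]
          with s hs hLne
        have hss : s - s₁ ≠ 0 := sub_ne_zero.2 hs
        have hAs : (a:ℚ) * s + (n:ℚ) + 1 = (a:ℚ) * (s - s₁) := by linear_combination hs₁
        have hBs : (d:ℚ) * s + (m:ℚ) + 1 = (d:ℚ) * (s - s₁) := by linear_combination hB
        have hLs : ((b:ℚ) * c - (a:ℚ) * d) * s + ((b:ℚ) - d) * ((n:ℚ) + 1) + ((c:ℚ) - a) * ((m:ℚ) + 1)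
            = K * s + q := by linear_combination (-s) * hKdef - hqdef
        simp only [Z]
        rw [hAs, hBs, hLs]
        field_simp
    · -- generic : order 1
      left
      apply pole_helper _ _ _
        (fun s => (((c:ℚ) - a) * ((d:ℚ) * s + m + 1) + (s - s₁) * (a:ℚ) * ((b:ℚ) - d)) /
          ((a:ℚ) * (K * s + q) * ((d:ℚ) * s + m + 1)))
      · apply ContinuousAt.div (by fun_prop) (by fun_prop)
        exact mul_ne_zero (mul_ne_zero ha'.ne' hL) hB
      · simp only [sub_self, zero_mul, mul_zero, add_zero]
        exact div_ne_zero (mul_ne_zero hca.ne' hB) (mul_ne_zero (mul_ne_zero ha'.ne' hL) hB)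
      · filter_upwards [ev_mem s₁, ev_ne (fun s => K * s + q) (by fun_prop) s₁ hL,
          ev_ne (fun s => (d:ℚ) * s + m + 1) (by fun_prop) s₁ hB] with s hs hLne hBs
        have hss : s - s₁ ≠ 0 := sub_ne_zero.2 hs
        have hAs : (a:ℚ) * s + (n:ℚ) + 1 = (a:ℚ) * (s - s₁) := by linear_combination hs₁
        have hLs : ((b:ℚ) * c - (a:ℚ) * d) * s + ((b:ℚ) - d) * ((n:ℚ) + 1) + ((c:ℚ) - a) * ((m:ℚ) + 1)
            = K * s + q := by linear_combination (-s) * hKdef - hqdef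
        simp only [Z]
        rw [hAs, hLs]
        rw [div_add_div _ _ (by simp [ha'.ne', hss, hLne, hBs]) (by simp [ha'.ne', hss, hLne, hBs]), mul_div_assoc', div_eq_div_iff (by simp [ha'.ne', hss, hLne, hBs]) (by simp [ha'.ne', hss, hLne, hBs])]
        ring

lemma Zsymm (a b c d n m : ℕ) : Z a b c d n m = Z d c b a m n := by
  funext s; simp only [Z]; ring

theorem stmt6 (a b c d : ℕ) (hac : a < c) (hdb : d < b) :
    ∀ n m : ℕ,
      (IsPoleOfOrder (Z a b c d n m)
          (-(((b : ℚ) - d) * (n + 1) + ((c : ℚ) - a) * (m + 1)) /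
            ((b : ℚ) * c - (a : ℚ) * d)) 1 ∨
        IsPoleOfOrder (Z a b c d n m)
          (-(((b : ℚ) - d) * (n + 1) + ((c : ℚ) - a) * (m + 1)) /
            ((b : ℚ) * c - (a : ℚ) * d)) 2) ∧
      (1 ≤ a →
        IsPoleOfOrder (Z a b c d n m) (-((n : ℚ) + 1) / a) 1 ∨
          IsPoleOfOrder (Z a b c d n m) (-((n : ℚ) + 1) / a) 2) ∧
      (1 ≤ d →
        IsPoleOfOrder (Z a b c d n m) (-((m : ℚ) + 1) / d) 1 ∨
          IsPoleOfOrder (Z a b c d n m) (-((m : ℚ) + 1) / d) 2) := by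
  intro n m
  refine ⟨aux2 a b c d n m hac hdb, fun ha => aux1 a b c d n m hac hdb ha, fun hd => ?_⟩
  rw [Zsymm a b c d n m]
  exact aux1 d c b a m n hdb hac hd
end

section
/- Assume additionally a ≥ 1 and d ≥ 1, and define the set R ⊆ ℚ as the union of the three families: (i) −(i+1)/a for integers 0 ≤ i ≤ a−1; (ii) −((b−d)·(k+1) + (c−a)·(l+1))/(bc−ad) for natural numbers k, l with k < c, l < b, d·(k+a−c) ≤ a·l, and a·l < d·k + a·(b−d) (inequalities in ℤ); (iii) −(j+1)/d for integers 0 ≤ j ≤ d−1. (By the Budur–Mustață–Saito description, R is the set of roots of the Bernstein–Sato polynomial of the ideal I = (x^a y^b, x^c y^d).) Then for every r ∈ R there exist natural numbers n, m such that r is a pole of the rational function Z_{n,m}; in fact one may take (n,m) = (i,0) for family (i), (n,m) = (k,l) for family (ii), and (n,m) = (0,j) for family (iii). -/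
/-- The set of roots of the Bernstein–Sato polynomial of the ideal
`I = (x^a y^b, x^c y^d)`, following the Budur–Mustață–Saito description. -/
def BSRoots (a b c d : ℕ) : Set ℚ :=
  {r : ℚ |
    (∃ i : ℕ, i < a ∧ r = -((i : ℚ) + 1) / a) ∨
    (∃ k l : ℕ, k < c ∧ l < b ∧
      (d : ℤ) * ((k : ℤ) + a - c) ≤ (a : ℤ) * l ∧
      (a : ℤ) * l < (d : ℤ) * k + (a : ℤ) * ((b : ℤ) - d) ∧
      r = -(((b : ℚ) - d) * ((k : ℚ) + 1) + ((c : ℚ) - a) * ((l : ℚ) + 1)) /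
        ((b : ℚ) * c - (a : ℚ) * d)) ∨
    (∃ j : ℕ, j < d ∧ r = -((j : ℚ) + 1) / d)}

open Filter Topology

lemma isPole_aux (Zf : ℚ → ℚ) (s₀ : ℚ) (k : ℕ) (hk : 1 ≤ k) (g : ℚ → ℚ)
    (hg : ContinuousAt g s₀) (hg0 : g s₀ ≠ 0)
    (heq : ∀ᶠ s in 𝓝[≠] s₀, (s - s₀) ^ k * Zf s = g s) : IsPole Zf s₀ :=
  ⟨k, hk, g s₀, hg0, Filter.Tendsto.congr' (Filter.EventuallyEq.symm heq)
    hg.continuousWithinAt⟩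

lemma caseA (a b c d n m : ℕ) (hac : a < c) (hdb : d < b) (ha : 1 ≤ a) (hd : 1 ≤ d)
    (s₀ : ℚ) (hA : (a:ℚ)*s₀ + n + 1 = 0)
    (hB : ((b:ℚ)*c - (a:ℚ)*d)*s₀ + ((b:ℚ)-d)*((n:ℚ)+1) + ((c:ℚ)-a)*((m:ℚ)+1) ≠ 0)
    (hC : (d:ℚ)*s₀ + m + 1 ≠ 0) : IsPole (Z a b c d n m) s₀ := by
  have hα : (0:ℚ) < a := by exact_mod_cast ha
  have hγα : (0:ℚ) < (c:ℚ) - a := by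
    have : (a:ℚ) < c := by exact_mod_cast hac
    linarith
  set B : ℚ → ℚ := fun s => ((b:ℚ)*c - (a:ℚ)*d)*s + ((b:ℚ)-d)*((n:ℚ)+1) + ((c:ℚ)-a)*((m:ℚ)+1)
    with hBdef
  set C : ℚ → ℚ := fun s => (d:ℚ)*s + m + 1 with hCdef
  apply isPole_aux (Z a b c d n m) s₀ 1 le_rfl
    (fun s => (((c:ℚ)-a)*(C s) + ((b:ℚ)-d)*((a:ℚ)*s + n + 1)) / ((a:ℚ) * (B s) * (C s)))
  · exact ContinuousAt.div (by fun_prop) (by fun_prop)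
      (mul_ne_zero (mul_ne_zero (ne_of_gt hα) hB) hC)
  · have hnum : ((c:ℚ)-a)*(C s₀) + ((b:ℚ)-d)*((a:ℚ)*s₀ + n + 1) = ((c:ℚ)-a)*(C s₀) := by
      rw [hA]; ring
    rw [hnum]
    exact div_ne_zero (mul_ne_zero (ne_of_gt hγα) hC)
      (mul_ne_zero (mul_ne_zero (ne_of_gt hα) hB) hC)
  · have e1 : ∀ᶠ s in 𝓝[≠] s₀, s ≠ s₀ := eventually_mem_nhdsWithin
    have e2 : ∀ᶠ s in 𝓝[≠] s₀, B s ≠ 0 :=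
      (((by fun_prop : Continuous B).continuousAt.eventually_ne hB).filter_mono
        nhdsWithin_le_nhds)
    have e3 : ∀ᶠ s in 𝓝[≠] s₀, C s ≠ 0 :=
      (((by fun_prop : Continuous C).continuousAt.eventually_ne hC).filter_mono
        nhdsWithin_le_nhds)
    filter_upwards [e1, e2, e3] with s hs hBs hCs
    have hAe : (a:ℚ)*s + n + 1 = (a:ℚ)*(s - s₀) := by linear_combination hA
    have hts : s - s₀ ≠ 0 := sub_ne_zero.mpr hs
    simp only [Z, pow_one, hBdef, hCdef] at *
    rw [hAe]
    have hCs' : s*(d:ℚ)+m+1 ≠ 0 := by rw [mul_comm]; exact hCs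
    have hBs' : s*((c:ℚ)*b-a*d)+(b-d)*(n+1)+(c-a)*(m+1) ≠ 0 := by intro h; apply hBs; linear_combination h
    field_simp

lemma caseAB (a b c d n m : ℕ) (hac : a < c) (hdb : d < b) (ha : 1 ≤ a) (hd : 1 ≤ d)
    (s₀ : ℚ) (hA : (a:ℚ)*s₀ + n + 1 = 0)
    (hB : ((b:ℚ)*c - (a:ℚ)*d)*s₀ + ((b:ℚ)-d)*((n:ℚ)+1) + ((c:ℚ)-a)*((m:ℚ)+1) = 0) :
    IsPole (Z a b c d n m) s₀ := by
  have hα : (0:ℚ) < a := by exact_mod_cast ha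
  have hδ : (0:ℚ) < d := by exact_mod_cast hd
  have hγα : (0:ℚ) < (c:ℚ) - a := by
    have : (a:ℚ) < c := by exact_mod_cast hac
    linarith
  have hβδ : (0:ℚ) < (b:ℚ) - d := by
    have : (d:ℚ) < b := by exact_mod_cast hdb
    linarith
  have hE : (0:ℚ) < (b:ℚ)*c - (a:ℚ)*d := by nlinarith
  have hC : (d:ℚ)*s₀ + m + 1 ≠ 0 := by
    intro hC0
    have key : ((c:ℚ)-a)*((b:ℚ)-d)*((n:ℚ)+1) = 0 := by
      linear_combination ((b:ℚ)*c-(a:ℚ)*d)*hA - (a:ℚ)*hB + ((c:ℚ)-a)*((a:ℚ)*hC0 - (d:ℚ)*hA)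
    have hpos : (0:ℚ) < ((c:ℚ)-a)*((b:ℚ)-d)*((n:ℚ)+1) := by
      apply mul_pos (mul_pos hγα hβδ); positivity
    rw [key] at hpos; exact lt_irrefl 0 hpos
  set C : ℚ → ℚ := fun s => (d:ℚ)*s + m + 1 with hCdef
  apply isPole_aux (Z a b c d n m) s₀ 2 (by norm_num)
    (fun s => (((c:ℚ)-a)*(C s) + ((b:ℚ)-d)*((a:ℚ)*s + n + 1)) /
      ((a:ℚ) * ((b:ℚ)*c - (a:ℚ)*d) * (C s)))
  · exact ContinuousAt.div (by fun_prop) (by fun_prop)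
      (mul_ne_zero (mul_ne_zero (ne_of_gt hα) (ne_of_gt hE)) hC)
  · have hnum : ((c:ℚ)-a)*(C s₀) + ((b:ℚ)-d)*((a:ℚ)*s₀ + n + 1) = ((c:ℚ)-a)*(C s₀) := by
      rw [hA]; ring
    rw [hnum]
    exact div_ne_zero (mul_ne_zero (ne_of_gt hγα) hC)
      (mul_ne_zero (mul_ne_zero (ne_of_gt hα) (ne_of_gt hE)) hC)
  · have e1 : ∀ᶠ s in 𝓝[≠] s₀, s ≠ s₀ := eventually_mem_nhdsWithin
    have e3 : ∀ᶠ s in 𝓝[≠] s₀, C s ≠ 0 :=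
      (((by fun_prop : Continuous C).continuousAt.eventually_ne hC).filter_mono
        nhdsWithin_le_nhds)
    filter_upwards [e1, e3] with s hs hCs
    have hAe : (a:ℚ)*s + n + 1 = (a:ℚ)*(s - s₀) := by linear_combination hA
    have hBe : ((b:ℚ)*c - (a:ℚ)*d)*s + ((b:ℚ)-d)*((n:ℚ)+1) + ((c:ℚ)-a)*((m:ℚ)+1)
        = ((b:ℚ)*c - (a:ℚ)*d)*(s - s₀) := by linear_combination hB
    have hts : s - s₀ ≠ 0 := sub_ne_zero.mpr hs
    simp only [Z, hCdef] at *
    rw [hAe, hBe]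
    have hCs' : s*(d:ℚ)+m+1 ≠ 0 := by rw [mul_comm]; exact hCs
    have hE' : (c:ℚ)*b - a*d ≠ 0 := by intro h; apply ne_of_gt hE; linear_combination h
    field_simp

lemma caseAC (a b c d n m : ℕ) (hac : a < c) (hdb : d < b) (ha : 1 ≤ a) (hd : 1 ≤ d)
    (s₀ : ℚ) (hA : (a:ℚ)*s₀ + n + 1 = 0) (hC : (d:ℚ)*s₀ + m + 1 = 0) :
    IsPole (Z a b c d n m) s₀ := by
  have hα : (0:ℚ) < a := by exact_mod_cast ha
  have hδ : (0:ℚ) < d := by exact_mod_cast hd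
  have hγα : (0:ℚ) < (c:ℚ) - a := by
    have : (a:ℚ) < c := by exact_mod_cast hac
    linarith
  have hβδ : (0:ℚ) < (b:ℚ) - d := by
    have : (d:ℚ) < b := by exact_mod_cast hdb
    linarith
  have hE : (0:ℚ) < (b:ℚ)*c - (a:ℚ)*d := by nlinarith
  have hB : ((b:ℚ)*c - (a:ℚ)*d)*s₀ + ((b:ℚ)-d)*((n:ℚ)+1) + ((c:ℚ)-a)*((m:ℚ)+1) ≠ 0 := by
    intro hB0
    have key : ((c:ℚ)-a)*((b:ℚ)-d)*((n:ℚ)+1) = 0 := by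
      linear_combination ((b:ℚ)*c-(a:ℚ)*d)*hA - (a:ℚ)*hB0 + ((c:ℚ)-a)*((a:ℚ)*hC - (d:ℚ)*hA)
    have hpos : (0:ℚ) < ((c:ℚ)-a)*((b:ℚ)-d)*((n:ℚ)+1) := by
      apply mul_pos (mul_pos hγα hβδ); positivity
    rw [key] at hpos; exact lt_irrefl 0 hpos
  set B : ℚ → ℚ := fun s => ((b:ℚ)*c - (a:ℚ)*d)*s + ((b:ℚ)-d)*((n:ℚ)+1) + ((c:ℚ)-a)*((m:ℚ)+1)
    with hBdef
  apply isPole_aux (Z a b c d n m) s₀ 1 le_rfl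
    (fun s => (((c:ℚ)-a)*(d:ℚ) + ((b:ℚ)-d)*(a:ℚ)) / ((a:ℚ) * (d:ℚ) * (B s)))
  · exact ContinuousAt.div (by fun_prop) (by fun_prop)
      (mul_ne_zero (mul_ne_zero (ne_of_gt hα) (ne_of_gt hδ)) hB)
  · exact div_ne_zero (by positivity)
      (mul_ne_zero (mul_ne_zero (ne_of_gt hα) (ne_of_gt hδ)) hB)
  · have e1 : ∀ᶠ s in 𝓝[≠] s₀, s ≠ s₀ := eventually_mem_nhdsWithin
    have e2 : ∀ᶠ s in 𝓝[≠] s₀, B s ≠ 0 :=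
      (((by fun_prop : Continuous B).continuousAt.eventually_ne hB).filter_mono
        nhdsWithin_le_nhds)
    filter_upwards [e1, e2] with s hs hBs
    have hAe : (a:ℚ)*s + n + 1 = (a:ℚ)*(s - s₀) := by linear_combination hA
    have hCe : (d:ℚ)*s + m + 1 = (d:ℚ)*(s - s₀) := by linear_combination hC
    have hts : s - s₀ ≠ 0 := sub_ne_zero.mpr hs
    simp only [Z, pow_one, hBdef] at *
    rw [hAe, hCe]
    field_simp

lemma caseB (a b c d n m : ℕ) (hac : a < c) (hdb : d < b) (ha : 1 ≤ a) (hd : 1 ≤ d)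
    (s₀ : ℚ) (hA : (a:ℚ)*s₀ + n + 1 ≠ 0)
    (hB : ((b:ℚ)*c - (a:ℚ)*d)*s₀ + ((b:ℚ)-d)*((n:ℚ)+1) + ((c:ℚ)-a)*((m:ℚ)+1) = 0)
    (hC : (d:ℚ)*s₀ + m + 1 ≠ 0) : IsPole (Z a b c d n m) s₀ := by
  have hα : (0:ℚ) < a := by exact_mod_cast ha
  have hδ : (0:ℚ) < d := by exact_mod_cast hd
  have hγα : (0:ℚ) < (c:ℚ) - a := by
    have : (a:ℚ) < c := by exact_mod_cast hac
    linarith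
  have hβδ : (0:ℚ) < (b:ℚ) - d := by
    have : (d:ℚ) < b := by exact_mod_cast hdb
    linarith
  have hE : (0:ℚ) < (b:ℚ)*c - (a:ℚ)*d := by nlinarith
  set A : ℚ → ℚ := fun s => (a:ℚ)*s + n + 1 with hAdef
  set C : ℚ → ℚ := fun s => (d:ℚ)*s + m + 1 with hCdef
  have hN : ((c:ℚ)-a)*(C s₀) + ((b:ℚ)-d)*(A s₀) ≠ 0 := by
    intro hN0
    simp only [hAdef, hCdef] at hN0
    have h1 : (((b:ℚ)-d)*((c:ℚ)-a))*s₀ = 0 := by linear_combination hB - hN0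
    have hs0 : s₀ = 0 := by
      rcases mul_eq_zero.mp h1 with h | h
      · exact absurd h (ne_of_gt (mul_pos hβδ hγα))
      · exact h
    rw [hs0] at hB
    have : (0:ℚ) < ((b:ℚ)-d)*((n:ℚ)+1) + ((c:ℚ)-a)*((m:ℚ)+1) := by
      have h1 : (0:ℚ) < ((b:ℚ)-d)*((n:ℚ)+1) := by positivity
      have h2 : (0:ℚ) < ((c:ℚ)-a)*((m:ℚ)+1) := by positivity
      linarith
    nlinarith [hB]
  apply isPole_aux (Z a b c d n m) s₀ 1 le_rfl
    (fun s => (((c:ℚ)-a)*(C s) + ((b:ℚ)-d)*(A s)) /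
      (((b:ℚ)*c - (a:ℚ)*d) * (A s) * (C s)))
  · exact ContinuousAt.div (by fun_prop) (by fun_prop)
      (mul_ne_zero (mul_ne_zero (ne_of_gt hE) hA) hC)
  · exact div_ne_zero hN (mul_ne_zero (mul_ne_zero (ne_of_gt hE) hA) hC)
  · have e1 : ∀ᶠ s in 𝓝[≠] s₀, s ≠ s₀ := eventually_mem_nhdsWithin
    have e2 : ∀ᶠ s in 𝓝[≠] s₀, A s ≠ 0 :=
      (((by fun_prop : Continuous A).continuousAt.eventually_ne hA).filter_mono
        nhdsWithin_le_nhds)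
    have e3 : ∀ᶠ s in 𝓝[≠] s₀, C s ≠ 0 :=
      (((by fun_prop : Continuous C).continuousAt.eventually_ne hC).filter_mono
        nhdsWithin_le_nhds)
    filter_upwards [e1, e2, e3] with s hs hAs hCs
    have hBe : ((b:ℚ)*c - (a:ℚ)*d)*s + ((b:ℚ)-d)*((n:ℚ)+1) + ((c:ℚ)-a)*((m:ℚ)+1)
        = ((b:ℚ)*c - (a:ℚ)*d)*(s - s₀) := by linear_combination hB
    have hts : s - s₀ ≠ 0 := sub_ne_zero.mpr hs
    simp only [Z, pow_one, hAdef, hCdef] at *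
    rw [hBe]
    have hAs' : s*(a:ℚ)+n+1 ≠ 0 := by rw [mul_comm]; exact hAs
    have hCs' : s*(d:ℚ)+m+1 ≠ 0 := by rw [mul_comm]; exact hCs
    have hE' : (c:ℚ)*b - a*d ≠ 0 := by intro h; apply ne_of_gt hE; linear_combination h
    field_simp

lemma Z_swap (a b c d n m : ℕ) (s : ℚ) : Z a b c d n m s = Z d c b a m n s := by
  simp only [Z]; ring

lemma master (a b c d n m : ℕ) (hac : a < c) (hdb : d < b) (ha : 1 ≤ a) (hd : 1 ≤ d)
    (s₀ : ℚ)
    (h : (a:ℚ)*s₀ + n + 1 = 0 ∨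
         ((b:ℚ)*c - (a:ℚ)*d)*s₀ + ((b:ℚ)-d)*((n:ℚ)+1) + ((c:ℚ)-a)*((m:ℚ)+1) = 0 ∨
         (d:ℚ)*s₀ + m + 1 = 0) :
    IsPole (Z a b c d n m) s₀ := by
  have hswap : Z a b c d n m = Z d c b a m n := funext (Z_swap a b c d n m)
  rcases h with hA | hB | hC
  · by_cases hB : ((b:ℚ)*c - (a:ℚ)*d)*s₀ + ((b:ℚ)-d)*((n:ℚ)+1) + ((c:ℚ)-a)*((m:ℚ)+1) = 0
    · exact caseAB a b c d n m hac hdb ha hd s₀ hA hB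
    · by_cases hC : (d:ℚ)*s₀ + m + 1 = 0
      · exact caseAC a b c d n m hac hdb ha hd s₀ hA hC
      · exact caseA a b c d n m hac hdb ha hd s₀ hA hB hC
  · by_cases hA : (a:ℚ)*s₀ + n + 1 = 0
    · exact caseAB a b c d n m hac hdb ha hd s₀ hA hB
    · by_cases hC : (d:ℚ)*s₀ + m + 1 = 0
      · rw [hswap]
        exact caseAB d c b a m n hdb hac hd ha s₀ (by linear_combination hC)
          (by linear_combination hB)
      · exact caseB a b c d n m hac hdb ha hd s₀ hA hB hC
  · by_cases hA : (a:ℚ)*s₀ + n + 1 = 0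
    · exact caseAC a b c d n m hac hdb ha hd s₀ hA hC
    · by_cases hB : ((b:ℚ)*c - (a:ℚ)*d)*s₀ + ((b:ℚ)-d)*((n:ℚ)+1) + ((c:ℚ)-a)*((m:ℚ)+1) = 0
      · rw [hswap]
        exact caseAB d c b a m n hdb hac hd ha s₀ (by linear_combination hC)
          (by linear_combination hB)
      · rw [hswap]
        exact caseA d c b a m n hdb hac hd ha s₀ (by linear_combination hC)
          (by intro h; exact hB (by linear_combination h)) (by assumption)

theorem stmt7 (a b c d : ℕ) (hac : a < c) (hdb : d < b) (ha : 1 ≤ a) (hd : 1 ≤ d) :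
    (∀ r ∈ BSRoots a b c d, ∃ n m : ℕ, IsPole (Z a b c d n m) r) ∧
      (∀ i : ℕ, i < a → IsPole (Z a b c d i 0) (-((i : ℚ) + 1) / a)) ∧
      (∀ k l : ℕ, k < c → l < b →
        (d : ℤ) * ((k : ℤ) + a - c) ≤ (a : ℤ) * l →
        (a : ℤ) * l < (d : ℤ) * k + (a : ℤ) * ((b : ℤ) - d) →
        IsPole (Z a b c d k l)
          (-(((b : ℚ) - d) * ((k : ℚ) + 1) + ((c : ℚ) - a) * ((l : ℚ) + 1)) /
            ((b : ℚ) * c - (a : ℚ) * d))) ∧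
      (∀ j : ℕ, j < d → IsPole (Z a b c d 0 j) (-((j : ℚ) + 1) / d)) := by
  have hα : ((a:ℚ)) ≠ 0 := by
    have : (0:ℚ) < a := by exact_mod_cast ha
    exact ne_of_gt this
  have hδ : ((d:ℚ)) ≠ 0 := by
    have : (0:ℚ) < d := by exact_mod_cast hd
    exact ne_of_gt this
  have hE : ((b:ℚ)*c - (a:ℚ)*d) ≠ 0 := by
    have h1 : (a:ℚ) < c := by exact_mod_cast hac
    have h2 : (d:ℚ) < b := by exact_mod_cast hdb
    have h3 : (0:ℚ) < d := by exact_mod_cast hd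
    have h4 : (0:ℚ) < a := by exact_mod_cast ha
    nlinarith
  have part2 : ∀ i : ℕ, i < a → IsPole (Z a b c d i 0) (-((i : ℚ) + 1) / a) := by
    intro i hi
    apply master a b c d i 0 hac hdb ha hd
    left
    field_simp
    ring
  have part3 : ∀ k l : ℕ, k < c → l < b →
      (d : ℤ) * ((k : ℤ) + a - c) ≤ (a : ℤ) * l →
      (a : ℤ) * l < (d : ℤ) * k + (a : ℤ) * ((b : ℤ) - d) →
      IsPole (Z a b c d k l)
        (-(((b : ℚ) - d) * ((k : ℚ) + 1) + ((c : ℚ) - a) * ((l : ℚ) + 1)) /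
          ((b : ℚ) * c - (a : ℚ) * d)) := by
    intro k l _ _ _ _
    apply master a b c d k l hac hdb ha hd
    right; left
    field_simp
    ring
  have part4 : ∀ j : ℕ, j < d → IsPole (Z a b c d 0 j) (-((j : ℚ) + 1) / d) := by
    intro j hj
    apply master a b c d 0 j hac hdb ha hd
    right; right
    field_simp
    ring
  refine ⟨?_, part2, part3, part4⟩
  intro r hr
  rcases hr with ⟨i, hi, hre⟩ | ⟨k, l, hk, hl, h1, h2, hre⟩ | ⟨j, hj, hre⟩
  · exact ⟨i, 0, hre ▸ part2 i hi⟩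
  · exact ⟨k, l, hre ▸ part3 k l hk hl h1 h2⟩
  · exact ⟨0, j, hre ▸ part4 j hj⟩
end

section
/- Let ν, ν′, ν₁, ν₂, ν₃ be natural numbers with ν ≥ 1, ν′ ≥ 1, ν₁ ≥ 3, ν₂ ≥ 4, ν₃ ≥ 7. Let S ⊆ ℕ × ℕ be the smallest set containing the pairs (1, ν), (1, ν′), (5, ν₁), (7, ν₂), (13, ν₃) and closed under the two rules: (i) if (N, μ) ∈ S and c ≥ 1 then (N, μ + c) ∈ S; (ii) if (N, μ) ∈ S, (N′, μ′) ∈ S and c ≥ 0 then (N + N′, μ + μ′ + c) ∈ S. Then every pair (N, μ) ∈ S satisfies 13·μ > 6·N; in particular, for every (N, μ) ∈ S with N ≠ 0 one has μ/N ≠ 6/13. -/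
/-- The set of pairs of numerical data `(N, μ)` of prime divisors that can occur
in a local embedded resolution of `(I, g·dx∧dy)` for `I = (xy⁵, x³y², x⁴y)` and
`g(0) = 0`: the smallest set containing the numerical data
`(1, ν), (1, ν'), (5, ν₁), (7, ν₂), (13, ν₃)` of the minimal principalization of `I`
and closed under the two blow-up rules. -/
inductive ResData (ν ν' ν₁ ν₂ ν₃ : ℕ) : ℕ × ℕ → Prop where
  | baseE : ResData ν ν' ν₁ ν₂ ν₃ (1, ν)
  | baseE' : ResData ν ν' ν₁ ν₂ ν₃ (1, ν')
  | base1 : ResData ν ν' ν₁ ν₂ ν₃ (5, ν₁)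
  | base2 : ResData ν ν' ν₁ ν₂ ν₃ (7, ν₂)
  | base3 : ResData ν ν' ν₁ ν₂ ν₃ (13, ν₃)
  | free : ∀ N μ c : ℕ, ResData ν ν' ν₁ ν₂ ν₃ (N, μ) → 1 ≤ c →
      ResData ν ν' ν₁ ν₂ ν₃ (N, μ + c)
  | inter : ∀ N μ N' μ' c : ℕ, ResData ν ν' ν₁ ν₂ ν₃ (N, μ) →
      ResData ν ν' ν₁ ν₂ ν₃ (N', μ') →
      ResData ν ν' ν₁ ν₂ ν₃ (N + N', μ + μ' + c)

theorem stmt9 (ν ν' ν₁ ν₂ ν₃ : ℕ) (hν : 1 ≤ ν) (hν' : 1 ≤ ν')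
    (hν₁ : 3 ≤ ν₁) (hν₂ : 4 ≤ ν₂) (hν₃ : 7 ≤ ν₃) :
    ∀ N μ : ℕ, ResData ν ν' ν₁ ν₂ ν₃ (N, μ) →
      6 * N < 13 * μ ∧ (N ≠ 0 → (μ : ℚ) / (N : ℚ) ≠ 6 / 13) := by
  have key : ∀ p : ℕ × ℕ, ResData ν ν' ν₁ ν₂ ν₃ p → 6 * p.1 < 13 * p.2 := by
    intro p h
    induction h with
    | baseE => simpa using by omega
    | baseE' => simpa using by omega
    | base1 => simpa using by omega
    | base2 => simpa using by omega
    | base3 => simpa using by omega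
    | free N μ c _ hc ih => simp only at ih ⊢; omega
    | inter N μ N' μ' c _ _ ih1 ih2 => simp only at ih1 ih2 ⊢; omega
  intro N μ h
  have hk := key (N, μ) h
  simp only at hk
  refine ⟨hk, fun hN heq => ?_⟩
  have hN0 : (N : ℚ) ≠ 0 := Nat.cast_ne_zero.mpr hN
  rw [div_eq_div_iff hN0 (by norm_num)] at heq
  have : (13 : ℚ) * μ = 6 * N := by ring_nf at heq ⊢; linarith
  have : 13 * μ = 6 * N := by exact_mod_cast this
  omega
end
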